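/- For z, w ∈ ℍ such that cos((z-w)/4) ≠ 0 and sin((z-w)/4) ≠ 0, define Γ_tw(z,w) := -log|tan((z-w)/4)| + log|tan((z - conj w)/4)| (the second tangent is automatically finite and nonzero since Im(z - conj w) > 0). Then: (a) Γ_tw(z + 2π, w) = -Γ_tw(z,w) (the twisted field changes sign under the half-turn); (b) Γ_tw(z + 4π, w) = Γ_tw(z,w) (periodicity on the double cover); (c) for every x ∈ ℝ and w ∈ ℍ, the same formula gives Γ_tw(x,w) = 0 (Dirichlet boundary condition). -/

import Mathlib

open Complex

/-- The covariance of the twisted Gaussian free field in the logarithmic chart: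
`Γ_tw(z,w) = -log|tan((z-w)/4)| + log|tan((z - conj w)/4)|`. -/
noncomputable def GammaTw (z w : ℂ) : ℝ :=
  - Real.log ‖Complex.tan ((z - w) / 4)‖
  + Real.log ‖Complex.tan ((z - (starRingEnd ℂ) w) / 4)‖

lemma sin_ne_zero_of_im_ne {ζ : ℂ} (h : ζ.im ≠ 0) : Complex.sin ζ ≠ 0 := by
  intro h0
  rcases Complex.sin_eq_zero_iff.1 h0 with ⟨k, hk⟩
  apply h
  rw [hk]
  simp

lemma cos_ne_zero_of_im_ne {ζ : ℂ} (h : ζ.im ≠ 0) : Complex.cos ζ ≠ 0 := by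
  intro h0
  rcases Complex.cos_eq_zero_iff.1 h0 with ⟨k, hk⟩
  apply h
  rw [hk]
  simp

lemma abs_tan_add_pi_div_two (ζ : ℂ) :
    ‖Complex.tan (ζ + Real.pi / 2)‖ = (‖Complex.tan ζ‖)⁻¹ := by
  rw [Complex.tan_eq_sin_div_cos, Complex.sin_add_pi_div_two, Complex.cos_add_pi_div_two,
    Complex.tan_eq_sin_div_cos]
  rw [norm_div, norm_div, norm_neg]
  rw [inv_div]

/-- Properties of the twisted covariance: sign change under the half-turn,
periodicity on the double cover, and the Dirichlet boundary condition. -/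
theorem gammaTw_properties :
    (∀ z w : ℂ, 0 < z.im → 0 < w.im →
      Complex.cos ((z - w) / 4) ≠ 0 → Complex.sin ((z - w) / 4) ≠ 0 →
      GammaTw (z + 2 * (Real.pi : ℂ)) w = - GammaTw z w)
    ∧ (∀ z w : ℂ, 0 < z.im → 0 < w.im →
      Complex.cos ((z - w) / 4) ≠ 0 → Complex.sin ((z - w) / 4) ≠ 0 →
      GammaTw (z + 4 * (Real.pi : ℂ)) w = GammaTw z w)
    ∧ (∀ (x : ℝ) (w : ℂ), 0 < w.im → GammaTw (x : ℂ) w = 0) := by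
  refine ⟨?_, ?_, ?_⟩
  · intro z w hz hw hc hs
    have h1 : (z + 2 * (Real.pi : ℂ) - w) / 4 = (z - w) / 4 + Real.pi / 2 := by
      push_cast; ring
    have h2 : (z + 2 * (Real.pi : ℂ) - (starRingEnd ℂ) w) / 4
        = (z - (starRingEnd ℂ) w) / 4 + Real.pi / 2 := by
      push_cast; ring
    have him : ((z - (starRingEnd ℂ) w) / 4).im ≠ 0 := by
      simp only [Complex.div_im, Complex.sub_im, Complex.conj_im]
      have : (0:ℝ) < z.im + w.im := by linarith
      simp [Complex.div_im]
      positivity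
    have htan1 : Complex.tan ((z - w) / 4) ≠ 0 := by
      rw [Complex.tan_eq_sin_div_cos]
      exact div_ne_zero hs hc
    have htan2 : Complex.tan ((z - (starRingEnd ℂ) w) / 4) ≠ 0 := by
      rw [Complex.tan_eq_sin_div_cos]
      exact div_ne_zero (sin_ne_zero_of_im_ne him) (cos_ne_zero_of_im_ne him)
    unfold GammaTw
    rw [h1, h2, abs_tan_add_pi_div_two, abs_tan_add_pi_div_two,
      Real.log_inv, Real.log_inv]
    ring
  · intro z w hz hw hc hs
    have h1 : (z + 4 * (Real.pi : ℂ) - w) / 4 = (z - w) / 4 + Real.pi := by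
      push_cast; ring
    have h2 : (z + 4 * (Real.pi : ℂ) - (starRingEnd ℂ) w) / 4
        = (z - (starRingEnd ℂ) w) / 4 + Real.pi := by
      push_cast; ring
    unfold GammaTw
    rw [h1, h2, Complex.tan_add_pi, Complex.tan_add_pi]
  · intro x w hw
    have h : ((x : ℂ) - (starRingEnd ℂ) w) / 4 = (starRingEnd ℂ) (((x : ℂ) - w) / 4) := by
      rw [map_div₀, map_sub, Complex.conj_ofReal, map_ofNat]
    unfold GammaTw
    rw [h, Complex.tan_conj, Complex.norm_conj]
    ring
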